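/- Let p ≤ q be positive integers, let u be an index with 1 ≤ u ≤ p, and let r ∈ ℤ^q be a vector with r(u) = −1. Let φ be the q×q integer matrix obtained from the identity matrix by replacing its u-th row by r, and let φ_p be the p×p integer matrix obtained from the p×p identity matrix by replacing its u-th row by (r(1),…,r(p)). Then φ·φ = I_q and φ_p·φ_p = I_p; consequently, for every p×q matrix B with rational entries, the matrix φ_pᵀ·B·φ (with φ, φ_p regarded as rational matrices) has the same rank as B. In particular, matrix mutation of B-matrices is an involution and preserves the rank of the B-matrix. -/

import Mathlib

lemma updateRow_sq {R : Type*} [CommRing R] {n : ℕ} [DecidableEq (Fin n)]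
    (v : Fin n) (s : Fin n → R) (hs : s v = -1) :
    (Matrix.updateRow (1 : Matrix (Fin n) (Fin n) R) v s) *
      Matrix.updateRow 1 v s = 1 := by
  ext i j
  rw [Matrix.mul_apply]
  by_cases hi : i = v
  · subst hi
    have h1 : ∀ k, (Matrix.updateRow (1 : Matrix (Fin n) (Fin n) R) i s) i k
        * (Matrix.updateRow 1 i s) k j
        = s k * (Matrix.updateRow 1 i s) k j := by
      intro k; rw [Matrix.updateRow_self]
    rw [Finset.sum_congr rfl (fun k _ => h1 k),
      ← Finset.add_sum_erase _ _ (Finset.mem_univ i), Matrix.updateRow_self, hs]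
    have h2 : ∀ k ∈ Finset.univ.erase i,
        s k * (Matrix.updateRow (1 : Matrix (Fin n) (Fin n) R) i s) k j
        = s k * (1 : Matrix (Fin n) (Fin n) R) k j := by
      intro k hk
      rw [Matrix.updateRow_ne (Finset.mem_erase.mp hk).1]
    rw [Finset.sum_congr rfl h2]
    by_cases hj : j = i
    · subst hj
      rw [Finset.sum_eq_zero, Matrix.one_apply_eq, hs]
      · ring
      · intro k hk
        rw [Matrix.one_apply_ne (Finset.mem_erase.mp hk).1, mul_zero]
    · rw [Finset.sum_eq_single j]
      · rw [Matrix.one_apply_eq, mul_one, Matrix.one_apply_ne (Ne.symm hj)]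
        ring
      · intro k _ hkj
        rw [Matrix.one_apply_ne hkj, mul_zero]
      · intro h
        exact absurd (Finset.mem_erase.mpr ⟨hj, Finset.mem_univ j⟩) h
  · rw [Finset.sum_eq_single i]
    · rw [Matrix.updateRow_ne hi, Matrix.one_apply_eq, one_mul]
    · intro k _ hki
      rw [Matrix.updateRow_ne hi, Matrix.one_apply_ne (Ne.symm hki), zero_mul]
    · simp

theorem stmt6 {p q : ℕ} (hp : 0 < p) (hpq : p ≤ q) (u : Fin p)
    (r : Fin q → ℤ) (hr : r (Fin.castLE hpq u) = -1) :
    let φ : Matrix (Fin q) (Fin q) ℤ := Matrix.updateRow 1 (Fin.castLE hpq u) r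
    let φp : Matrix (Fin p) (Fin p) ℤ :=
      Matrix.updateRow 1 u (fun i => r (Fin.castLE hpq i))
    φ * φ = 1 ∧ φp * φp = 1 ∧
      ∀ B : Matrix (Fin p) (Fin q) ℚ,
        ((φp.map (Int.cast : ℤ → ℚ)).transpose * B * φ.map (Int.cast : ℤ → ℚ)).rank
          = B.rank := by
  intro φ φp
  have hφ : φ * φ = 1 := updateRow_sq _ r hr
  have hφp : φp * φp = 1 := updateRow_sq u _ hr
  refine ⟨hφ, hφp, fun B => ?_⟩
  have hmap : ∀ {m : ℕ} (M : Matrix (Fin m) (Fin m) ℤ), M * M = 1 →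
      IsUnit ((M.map (Int.cast : ℤ → ℚ)).det) := by
    intro m M hM
    have : M.map (Int.cast : ℤ → ℚ) * M.map (Int.cast : ℤ → ℚ) = 1 := by
      have : ((M * M).map (Int.cast : ℤ → ℚ)) = 1 := by
        rw [hM, Matrix.map_one _ Int.cast_zero Int.cast_one]
      rw [← this]; exact (Matrix.map_mul (f := Int.castRingHom ℚ)).symm
    have := congrArg Matrix.det this
    rw [Matrix.det_mul, Matrix.det_one] at this
    exact IsUnit.of_mul_eq_one _ this
  rw [Matrix.rank_mul_eq_left_of_isUnit_det _ _ (hmap φ hφ),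
    Matrix.rank_mul_eq_right_of_isUnit_det _ _ (by rw [Matrix.det_transpose]; exact hmap φp hφp)]
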